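/- Let K be an m×n real matrix such that A − BK is Schur stable, let P be a real symmetric n×n matrix satisfying the discrete Lyapunov equation P = Q + KᵀRK + (A − BK)ᵀP(A − BK), and define the updated gain K' = (R + BᵀPB)⁻¹BᵀPA. Then A − BK' is Schur stable. -/

import Mathlib

open Matrix Filter
open scoped ENNReal NNReal ComplexOrder

/-- entries of powers of a matrix with spectral radius `< 1` tend to `0`. -/
private lemma tendsto_pow_entry {n : ℕ} (M : Matrix (Fin n) (Fin n) ℂ)
    (h : ∀ μ ∈ spectrum ℂ M, ‖μ‖ < 1) (i j : Fin n) :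
    Tendsto (fun k => ‖(M ^ k) i j‖) atTop (nhds 0) := by
  have : Nonempty (Fin n) := ⟨i⟩
  letI : NormedRing (Matrix (Fin n) (Fin n) ℂ) := Matrix.linftyOpNormedRing
  letI : NormedAlgebra ℂ (Matrix (Fin n) (Fin n) ℂ) := Matrix.linftyOpNormedAlgebra
  letI : CompleteSpace (Matrix (Fin n) (Fin n) ℂ) :=
    by infer_instance
  have hρ : spectralRadius ℂ M < 1 := by
    have := spectrum.spectralRadius_lt_of_forall_lt (a := M) (r := 1)
      (fun z hz => by simpa [← NNReal.coe_lt_coe, coe_nnnorm] using h z hz)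
    simpa using this
  obtain ⟨c, hc1, hc2⟩ := exists_between hρ
  have hcne : c ≠ ⊤ := (hc2.trans_le le_top).ne
  -- Gelfand
  have hg := spectrum.pow_nnnorm_pow_one_div_tendsto_nhds_spectralRadius M
  have hev : ∀ᶠ (k : ℕ) in atTop, (‖M ^ k‖₊ : ℝ≥0∞) ^ (1 / (k:ℕ) : ℝ) < c :=
    hg.eventually_lt_const hc1
  have hev2 : ∀ᶠ k in atTop, (‖M ^ k‖ : ℝ) ≤ c.toReal ^ k := by
    filter_upwards [hev, eventually_ge_atTop 1] with k hk hk1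
    have hkpos : (0:ℝ) < k := by positivity
    have hx : (‖M ^ k‖₊ : ℝ≥0∞) ≤ c ^ k := by
      have := ENNReal.rpow_le_rpow hk.le (le_of_lt hkpos)
      rwa [← ENNReal.rpow_mul, one_div, inv_mul_cancel₀ hkpos.ne', ENNReal.rpow_one,
        ENNReal.rpow_natCast] at this
    have := ENNReal.toReal_mono (by simp [ENNReal.pow_ne_top hcne]) hx
    simpa [ENNReal.toReal_pow, coe_nnnorm] using this
  have hc2' : c.toReal < 1 := by
    have := ENNReal.toReal_mono (by simp) hc2.le
    rcases lt_or_eq_of_le this with h' | h'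
    · simpa using h'
    · exfalso
      have : c = 1 := by
        have := ENNReal.toReal_eq_one_iff c |>.mp (by simpa using h')
        exact this
      exact absurd (this ▸ hc2) (lt_irrefl _)
  have hc0 : 0 ≤ c.toReal := ENNReal.toReal_nonneg
  have hpow : Tendsto (fun k : ℕ => c.toReal ^ k) atTop (nhds 0) :=
    tendsto_pow_atTop_nhds_zero_of_lt_one hc0 hc2'
  have hentry : ∀ k, ‖(M ^ k) i j‖ ≤ ‖M ^ k‖ := by
    intro k
    have h1 : ‖(M ^ k) i j‖₊ ≤ ∑ j', ‖(M ^ k) i j'‖₊ :=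
      Finset.single_le_sum (f := fun j' => ‖(M ^ k) i j'‖₊) (fun _ _ => zero_le)
        (Finset.mem_univ j)
    have h2 : (∑ j', ‖(M ^ k) i j'‖₊) ≤ ‖M ^ k‖₊ := by
      rw [Matrix.linfty_opNNNorm_def]
      exact Finset.le_sup (f := fun i => ∑ j', ‖(M ^ k) i j'‖₊) (Finset.mem_univ i)
    exact_mod_cast h1.trans h2
  apply squeeze_zero (fun k => norm_nonneg _) hentry
  exact tendsto_of_tendsto_of_tendsto_of_le_of_le' tendsto_const_nhds hpow
    (Eventually.of_forall fun k => norm_nonneg _) hev2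
open Matrix Filter
open scoped ENNReal NNReal ComplexOrder

private lemma map_pow_algebraMap {n : ℕ} (X : Matrix (Fin n) (Fin n) ℝ) (k : ℕ) :
    (X.map (algebraMap ℝ ℂ)) ^ k = (X ^ k).map (algebraMap ℝ ℂ) := by
  induction k with
  | zero => simp [Matrix.map_one]
  | succ k ih => rw [pow_succ, pow_succ, ih, Matrix.map_mul]

private lemma transpose_map_algebraMap {p q : ℕ} (X : Matrix (Fin p) (Fin q) ℝ) :
    Xᵀ.map (algebraMap ℝ ℂ) = (X.map (algebraMap ℝ ℂ))ᴴ := by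
  rw [← conjTranspose_eq_transpose_of_trivial X,
    Matrix.conjTranspose_map _ (fun r => by simp [Complex.conj_ofReal])]

private lemma lyap_posSemidef {n : ℕ} {L S P : Matrix (Fin n) (Fin n) ℝ}
    (hS : S.PosSemidef) (hPsymm : P.IsSymm)
    (hL : ∀ μ ∈ spectrum ℂ (L.map (algebraMap ℝ ℂ)), ‖μ‖ < 1)
    (hP : P = S + Lᵀ * P * L) : P.PosSemidef := by
  have hstab : ∀ i j : Fin n, Tendsto (fun k => ‖(L ^ k) i j‖) atTop (nhds 0) := by
    intro i j
    have h := tendsto_pow_entry (L.map (algebraMap ℝ ℂ)) hL i j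
    have key : (fun k => ‖((L.map (algebraMap ℝ ℂ)) ^ k) i j‖)
        = fun k => ‖(L ^ k) i j‖ := by
      funext k
      rw [map_pow_algebraMap]
      simp [Matrix.map_apply]
    rw [key] at h
    exact h
  -- coordinates of iterates tend to 0
  have hv : ∀ (x : Fin n → ℝ) (i : Fin n),
      Tendsto (fun k => ((L ^ k) *ᵥ x) i) atTop (nhds 0) := by
    intro x i
    have : ∀ k, ((L ^ k) *ᵥ x) i = ∑ j, (L ^ k) i j * x j := fun k => rfl
    simp only [this]
    have h0 : Tendsto (fun k => ∑ j, (L ^ k) i j * x j) atTop (nhds (∑ j : Fin n, 0)) := by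
      apply tendsto_finset_sum
      intro j _
      have := (tendsto_zero_iff_norm_tendsto_zero).mpr (hstab i j)
      simpa using this.mul_const (x j)
    simpa using h0
  -- quadratic form along iterates tends to 0
  have hq : ∀ x : Fin n → ℝ,
      Tendsto (fun k => ((L ^ k) *ᵥ x) ⬝ᵥ P *ᵥ ((L ^ k) *ᵥ x)) atTop (nhds 0) := by
    intro x
    have : ∀ k, ((L ^ k) *ᵥ x) ⬝ᵥ P *ᵥ ((L ^ k) *ᵥ x)
        = ∑ i, ((L ^ k) *ᵥ x) i * ∑ j, P i j * ((L ^ k) *ᵥ x) j := by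
      intro k
      simp [dotProduct, Matrix.mulVec, Finset.mul_sum]
    simp only [this]
    have h0 : Tendsto (fun k => ∑ i, ((L ^ k) *ᵥ x) i * ∑ j, P i j * ((L ^ k) *ᵥ x) j)
        atTop (nhds (∑ i : Fin n, 0)) := by
      apply tendsto_finset_sum
      intro i _
      have hsum : Tendsto (fun k => ∑ j, P i j * ((L ^ k) *ᵥ x) j) atTop
          (nhds (∑ j : Fin n, 0)) := by
        apply tendsto_finset_sum
        intro j _
        simpa using (hv x j).const_mul (P i j)
      have := (hv x i).mul hsum
      simpa using this
    simpa using h0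
  -- iterated expansion
  have hiter : ∀ (x : Fin n → ℝ) (k : ℕ), x ⬝ᵥ P *ᵥ x
      = (∑ jj ∈ Finset.range k, ((L ^ jj) *ᵥ x) ⬝ᵥ S *ᵥ ((L ^ jj) *ᵥ x))
        + ((L ^ k) *ᵥ x) ⬝ᵥ P *ᵥ ((L ^ k) *ᵥ x) := by
    intro x k
    induction k with
    | zero => simp [Matrix.one_mulVec]
    | succ k ih =>
      rw [Finset.sum_range_succ, ih]
      have hstep : ((L ^ k) *ᵥ x) ⬝ᵥ P *ᵥ ((L ^ k) *ᵥ x)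
          = ((L ^ k) *ᵥ x) ⬝ᵥ S *ᵥ ((L ^ k) *ᵥ x)
            + ((L ^ (k + 1)) *ᵥ x) ⬝ᵥ P *ᵥ ((L ^ (k + 1)) *ᵥ x) := by
        set y := (L ^ k) *ᵥ x with hy
        have h1 : (L ^ (k + 1)) *ᵥ x = L *ᵥ y := by
          rw [pow_succ', ← Matrix.mulVec_mulVec]
        rw [h1]
        have h2 : y ⬝ᵥ (Lᵀ * P * L) *ᵥ y = (L *ᵥ y) ⬝ᵥ P *ᵥ (L *ᵥ y) := by
          rw [Matrix.dotProduct_mulVec, ← Matrix.vecMul_vecMul, ← Matrix.vecMul_vecMul,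
            Matrix.vecMul_transpose, ← Matrix.dotProduct_mulVec, ← Matrix.dotProduct_mulVec]
        conv_lhs => rw [hP]
        rw [Matrix.add_mulVec, dotProduct_add, h2]
      rw [hstep]; ring
  have hge : ∀ (x : Fin n → ℝ) (k : ℕ),
      ((L ^ k) *ᵥ x) ⬝ᵥ P *ᵥ ((L ^ k) *ᵥ x) ≤ x ⬝ᵥ P *ᵥ x := by
    intro x k
    rw [hiter x k]
    have : 0 ≤ ∑ jj ∈ Finset.range k, ((L ^ jj) *ᵥ x) ⬝ᵥ S *ᵥ ((L ^ jj) *ᵥ x) := by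
      apply Finset.sum_nonneg
      intro jj _
      have := hS.dotProduct_mulVec_nonneg ((L ^ jj) *ᵥ x)
      simpa using this
    linarith
  refine posSemidef_iff_dotProduct_mulVec.mpr ⟨?_, ?_⟩
  · rw [Matrix.IsHermitian, conjTranspose_eq_transpose_of_trivial]
    exact hPsymm
  · intro x
    have h0 : (0:ℝ) ≤ x ⬝ᵥ P *ᵥ x :=
      le_of_tendsto (hq x) (Eventually.of_forall fun k => hge x k)
    simpa using h0

private lemma posSemidef_map_complex {n : ℕ} {M : Matrix (Fin n) (Fin n) ℝ} (h : M.PosSemidef) :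
    (M.map (algebraMap ℝ ℂ)).PosSemidef := by
  obtain ⟨k, C, rfl⟩ : ∃ (k : ℕ) (C : Matrix (Fin k) (Fin n) ℝ), M = Cᴴ * C := by
    obtain ⟨k, v, hv⟩ := Matrix.posSemidef_iff_eq_sum_vecMulVec.mp h
    exact ⟨k, Matrix.of fun i j => v i j, by
      ext a b; simp [hv, Matrix.mul_apply, vecMulVec_apply, Matrix.sum_apply]⟩
  have : (Cᴴ * C).map (algebraMap ℝ ℂ)
      = (C.map (algebraMap ℝ ℂ))ᴴ * (C.map (algebraMap ℝ ℂ)) := by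
    rw [Matrix.map_mul, Matrix.conjTranspose_map]
    intro r
    simp [Complex.conj_ofReal]
  rw [this]
  exact Matrix.posSemidef_conjTranspose_mul_self _

private lemma posDef_map_complex {n : ℕ} {M : Matrix (Fin n) (Fin n) ℝ} (h : M.PosDef) :
    (M.map (algebraMap ℝ ℂ)).PosDef := by
  have hpsd := posSemidef_map_complex h.posSemidef
  refine posDef_iff_dotProduct_mulVec.mpr ⟨hpsd.1, fun x hx => ?_⟩
  rcases lt_or_eq_of_le (hpsd.dotProduct_mulVec_nonneg x) with h' | h'
  · exact h'
  · exfalso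
    have h0 : (M.map (algebraMap ℝ ℂ)) *ᵥ x = 0 :=
      (hpsd.dotProduct_mulVec_zero_iff x).mp h'.symm
    have hdet : (M.map (algebraMap ℝ ℂ)).det = 0 :=
      (Matrix.exists_mulVec_eq_zero_iff).mp ⟨x, hx, h0⟩
    have : (M.map (algebraMap ℝ ℂ)).det = (M.det : ℂ) := by
      rw [← RingHom.mapMatrix_apply, ← RingHom.map_det]
      rfl
    rw [this] at hdet
    have := h.det_pos
    simp only [Complex.ofReal_eq_zero] at hdet
    linarith

private lemma quad_conj {n p : ℕ} (X : Matrix (Fin p) (Fin n) ℂ) (Y : Matrix (Fin p) (Fin p) ℂ)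
    (v : Fin n → ℂ) :
    star v ⬝ᵥ (Xᴴ * Y * X) *ᵥ v = star (X *ᵥ v) ⬝ᵥ Y *ᵥ (X *ᵥ v) := by
  rw [Matrix.dotProduct_mulVec, ← Matrix.vecMul_vecMul, ← Matrix.vecMul_vecMul,
    ← Matrix.star_mulVec, ← Matrix.dotProduct_mulVec, ← Matrix.dotProduct_mulVec]

-- eigenvector from spectrum membership

private lemma eigenvector_of_mem_spectrum {n : ℕ} {M : Matrix (Fin n) (Fin n) ℂ} {μ : ℂ}
    (hμ : μ ∈ spectrum ℂ M) : ∃ v : Fin n → ℂ, v ≠ 0 ∧ M *ᵥ v = μ • v := by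
  rw [spectrum.mem_iff] at hμ
  have hdet : (algebraMap ℂ (Matrix (Fin n) (Fin n) ℂ) μ - M).det = 0 := by
    by_contra hd
    exact hμ ((Matrix.isUnit_iff_isUnit_det _).mpr (isUnit_iff_ne_zero.mpr hd))
  obtain ⟨v, hv0, hveq⟩ := Matrix.exists_mulVec_eq_zero_iff.mpr hdet
  refine ⟨v, hv0, ?_⟩
  rw [Matrix.sub_mulVec] at hveq
  have halg : (algebraMap ℂ (Matrix (Fin n) (Fin n) ℂ) μ) *ᵥ v = μ • v := by
    rw [Algebra.algebraMap_eq_smul_one]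
    rw [Matrix.smul_mulVec, Matrix.one_mulVec]
  rw [halg] at hveq
  rw [sub_eq_zero] at hveq
  exact hveq.symm

private lemma mulVec_map_real {n p : ℕ} (W : Matrix (Fin p) (Fin n) ℝ) (v : Fin n → ℂ)
    (h : (W.map (algebraMap ℝ ℂ)) *ᵥ v = 0) :
    W *ᵥ (fun i => (v i).re) = 0 ∧ W *ᵥ (fun i => (v i).im) = 0 := by
  constructor <;>
  · funext i
    have hi := congrFun h i
    simp only [Matrix.mulVec, dotProduct, Matrix.map_apply, Pi.zero_apply] at hi ⊢
    first
    | · have := congrArg Complex.re hi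
        simpa [Complex.re_sum, Complex.mul_re] using this
    | · have := congrArg Complex.im hi
        simpa [Complex.im_sum, Complex.mul_im] using this

/-- A real square matrix is Schur stable if every eigenvalue of it, viewed as a
complex matrix, has modulus strictly less than `1`. -/
def SchurStable {n : ℕ} (M : Matrix (Fin n) (Fin n) ℝ) : Prop :=
  ∀ μ ∈ spectrum ℂ (M.map (algebraMap ℝ ℂ)), ‖μ‖ < 1

theorem stmt_0 {n m : ℕ}
    (A : Matrix (Fin n) (Fin n) ℝ) (B : Matrix (Fin n) (Fin m) ℝ)
    (Q : Matrix (Fin n) (Fin n) ℝ) (R : Matrix (Fin m) (Fin m) ℝ)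
    (hQ : Q.PosSemidef) (hR : R.PosDef)
    (hObs : ∀ x : Fin n → ℝ, (∀ k : ℕ, Q.mulVec ((A ^ k).mulVec x) = 0) → x = 0)
    (K : Matrix (Fin m) (Fin n) ℝ)
    (hK : SchurStable (A - B * K))
    (P : Matrix (Fin n) (Fin n) ℝ) (hPsymm : P.IsSymm)
    (hP : P = Q + Kᵀ * R * K + (A - B * K)ᵀ * P * (A - B * K))
    (K' : Matrix (Fin m) (Fin n) ℝ)
    (hK' : K' = (R + Bᵀ * P * B)⁻¹ * (Bᵀ * P * A)) :
    SchurStable (A - B * K') := by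
  intro μ hμ
  by_contra hcon
  rw [not_lt] at hcon
  -- basic symmetric facts
  have hPt : Pᵀ = P := hPsymm
  have hRt : Rᵀ = R := by
    have := hR.isHermitian
    rwa [Matrix.IsHermitian, conjTranspose_eq_transpose_of_trivial] at this
  -- P is positive semidefinite
  have hKRK : (Kᵀ * R * K).PosSemidef := by
    have := hR.posSemidef.conjTranspose_mul_mul_same K
    rwa [conjTranspose_eq_transpose_of_trivial] at this
  have hS : (Q + Kᵀ * R * K).PosSemidef := hQ.add hKRK
  have hPpsd : P.PosSemidef := lyap_posSemidef hS hPsymm hK hP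
  -- G is positive definite
  have hBPB : (Bᵀ * P * B).PosSemidef := by
    have := hPpsd.conjTranspose_mul_mul_same B
    rwa [conjTranspose_eq_transpose_of_trivial] at this
  obtain ⟨G, hGdef⟩ : ∃ G, G = R + Bᵀ * P * B := ⟨_, rfl⟩
  have hG : G.PosDef := hGdef ▸ hR.add_posSemidef hBPB
  have hGt : Gᵀ = G := by
    rw [hGdef, Matrix.transpose_add, hRt, Matrix.transpose_mul, Matrix.transpose_mul,
      Matrix.transpose_transpose, hPt, ← Matrix.mul_assoc]
  have hGdetUnit : IsUnit G.det := isUnit_iff_ne_zero.mpr hG.det_pos.ne'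
  have hGK' : G * K' = Bᵀ * P * A := by
    rw [hK', ← hGdef, ← Matrix.mul_assoc, Matrix.mul_nonsing_inv G hGdetUnit, Matrix.one_mul]
  -- the completed-square identity
  obtain ⟨E, hE⟩ : ∃ E, E = K - K' := ⟨_, rfl⟩
  have hkey : P = Q + K'ᵀ * R * K' + Eᵀ * G * E
      + (A - B * K')ᵀ * P * (A - B * K') := by
    set L := A - B * K with hL
    set L' := A - B * K' with hL'
    have hBPL : Bᵀ * P * L = R * K - G * E := by
      rw [hE, Matrix.mul_sub G, hGK', hGdef, hL, Matrix.mul_sub (Bᵀ * P)]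
      simp only [Matrix.add_mul, Matrix.mul_assoc]
      abel
    have hLPB : Lᵀ * (P * B) = Kᵀ * R - Eᵀ * G := by
      have h := congrArg Matrix.transpose hBPL
      simp only [Matrix.transpose_mul, Matrix.transpose_sub, Matrix.transpose_transpose,
        hPt, hRt, hGt, Matrix.mul_assoc] at h
      rw [← Matrix.mul_assoc] at h ⊢
      exact h
    have hL'E : L' = L + B * E := by
      rw [hL, hL', hE, Matrix.mul_sub]
      abel
    have hK'E : K' = K - E := by rw [hE]; abel
    have e1 : Lᵀ * (P * (B * E)) = Kᵀ * (R * E) - Eᵀ * (G * E) := by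
      have h : Lᵀ * (P * B) * E = (Kᵀ * R - Eᵀ * G) * E := by rw [hLPB]
      simpa only [Matrix.sub_mul, Matrix.mul_assoc] using h
    have e2 : Eᵀ * (Bᵀ * (P * L)) = Eᵀ * (R * K) - Eᵀ * (G * E) := by
      have h : Eᵀ * (Bᵀ * P * L) = Eᵀ * (R * K - G * E) := by rw [hBPL]
      simpa only [Matrix.mul_sub, Matrix.mul_assoc] using h
    have e3 : Eᵀ * (Bᵀ * (P * (B * E))) = Eᵀ * (G * E) - Eᵀ * (R * E) := by
      have h : Eᵀ * ((R + Bᵀ * P * B) * E) = Eᵀ * (G * E) := by rw [← hGdef]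
      simp only [Matrix.add_mul, Matrix.mul_add, Matrix.mul_assoc] at h
      rw [← h]
      abel
    rw [hK'E, hL'E]
    conv_lhs => rw [hP]
    simp only [Matrix.transpose_sub, Matrix.transpose_add, Matrix.transpose_mul,
      Matrix.sub_mul, Matrix.mul_sub, Matrix.add_mul, Matrix.mul_add, Matrix.mul_assoc]
    rw [e1, e2, e3]
    abel
  -- complexify
  obtain ⟨v, hv0, hvec⟩ := eigenvector_of_mem_spectrum hμ
  have hkeyC : P.map (algebraMap ℝ ℂ) =
      Q.map (algebraMap ℝ ℂ)
      + (K'.map (algebraMap ℝ ℂ))ᴴ * R.map (algebraMap ℝ ℂ) * K'.map (algebraMap ℝ ℂ)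
      + (E.map (algebraMap ℝ ℂ))ᴴ * G.map (algebraMap ℝ ℂ) * E.map (algebraMap ℝ ℂ)
      + ((A - B * K').map (algebraMap ℝ ℂ))ᴴ * P.map (algebraMap ℝ ℂ)
        * ((A - B * K').map (algebraMap ℝ ℂ)) := by
    have h := congrArg (Matrix.map · (algebraMap ℝ ℂ)) hkey
    conv_lhs => rw [h]
    rw [Matrix.map_add _ (map_add _), Matrix.map_add _ (map_add _),
      Matrix.map_add _ (map_add _)]
    rw [Matrix.map_mul (f := algebraMap ℝ ℂ), Matrix.map_mul (f := algebraMap ℝ ℂ),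
      Matrix.map_mul (f := algebraMap ℝ ℂ), Matrix.map_mul (f := algebraMap ℝ ℂ),
      Matrix.map_mul (f := algebraMap ℝ ℂ), Matrix.map_mul (f := algebraMap ℝ ℂ)]
    rw [transpose_map_algebraMap, transpose_map_algebraMap, transpose_map_algebraMap]
  -- quadratic forms
  have hquad := congrArg (fun M => star v ⬝ᵥ M *ᵥ v) hkeyC
  simp only [Matrix.add_mulVec, dotProduct_add, quad_conj] at hquad
  set p := star v ⬝ᵥ (P.map (algebraMap ℝ ℂ)) *ᵥ v with hp_def
  set q1 := star v ⬝ᵥ (Q.map (algebraMap ℝ ℂ)) *ᵥ v with hq1_def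
  set w2 := (K'.map (algebraMap ℝ ℂ)) *ᵥ v with hw2_def
  set q2 := star w2 ⬝ᵥ (R.map (algebraMap ℝ ℂ)) *ᵥ w2 with hq2_def
  set w3 := (E.map (algebraMap ℝ ℂ)) *ᵥ v with hw3_def
  set q3 := star w3 ⬝ᵥ (G.map (algebraMap ℝ ℂ)) *ᵥ w3 with hq3_def
  -- last term equals |μ|^2 * p
  have hlast : star (((A - B * K').map (algebraMap ℝ ℂ)) *ᵥ v)
        ⬝ᵥ (P.map (algebraMap ℝ ℂ)) *ᵥ (((A - B * K').map (algebraMap ℝ ℂ)) *ᵥ v)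
      = (‖μ‖ ^ 2 : ℝ) * p := by
    rw [hvec]
    rw [star_smul, Matrix.mulVec_smul, smul_dotProduct, dotProduct_smul]
    rw [hp_def]
    rw [smul_smul, smul_eq_mul]
    congr 1
    rw [RCLike.star_def, ← Complex.normSq_eq_conj_mul_self]
    rw [Complex.normSq_eq_norm_sq]
  rw [hlast] at hquad
  -- positivity facts
  have hq1n : 0 ≤ q1 := (posSemidef_map_complex hQ).dotProduct_mulVec_nonneg v
  have hq2n : 0 ≤ q2 := (posDef_map_complex hR).posSemidef.dotProduct_mulVec_nonneg w2
  have hq3n : 0 ≤ q3 := (posDef_map_complex hG).posSemidef.dotProduct_mulVec_nonneg w3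
  have hpn : 0 ≤ p := (posSemidef_map_complex hPpsd).dotProduct_mulVec_nonneg v
  -- all quadratic terms vanish
  have hc1 : (1:ℝ) ≤ ‖μ‖ ^ 2 := by nlinarith [hcon]
  have hpim : p.im = 0 := (Complex.le_def.mp hpn).2.symm
  have hpre : 0 ≤ p.re := by simpa using (Complex.le_def.mp hpn).1
  have hsum_re : q1.re + q2.re + q3.re ≤ 0 := by
    have h := congrArg Complex.re hquad
    simp only [Complex.add_re, Complex.mul_re, Complex.ofReal_re, Complex.ofReal_im] at h
    nlinarith [hpim, hpre, hc1]
  have hq1re : 0 ≤ q1.re := by simpa using (Complex.le_def.mp hq1n).1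
  have hq2re : 0 ≤ q2.re := by simpa using (Complex.le_def.mp hq2n).1
  have hq3re : 0 ≤ q3.re := by simpa using (Complex.le_def.mp hq3n).1
  have hq1im : q1.im = 0 := ((Complex.le_def.mp hq1n).2).symm
  have hq2im : q2.im = 0 := ((Complex.le_def.mp hq2n).2).symm
  have hq1z : q1 = 0 := by
    apply Complex.ext
    · simp only [Complex.zero_re]; linarith
    · simp only [Complex.zero_im]; exact hq1im
  have hq2z : q2 = 0 := by
    apply Complex.ext
    · simp only [Complex.zero_re]; linarith
    · simp only [Complex.zero_im]; exact hq2im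
  -- conclude Qc v = 0 and K'c v = 0
  have hQv : (Q.map (algebraMap ℝ ℂ)) *ᵥ v = 0 :=
    ((posSemidef_map_complex hQ).dotProduct_mulVec_zero_iff v).mp hq1z
  have hw2z : w2 = 0 := by
    by_contra hw
    have h := (posDef_map_complex hR).dotProduct_mulVec_pos hw
    rw [← hq2_def, hq2z] at h
    exact lt_irrefl 0 h
  -- A v = μ v
  have hAv : (A.map (algebraMap ℝ ℂ)) *ᵥ v = μ • v := by
    have hsub : (A - B * K').map (algebraMap ℝ ℂ)
        = A.map (algebraMap ℝ ℂ) - (B.map (algebraMap ℝ ℂ)) * (K'.map (algebraMap ℝ ℂ)) := by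
      rw [Matrix.map_sub _ (map_sub _), Matrix.map_mul (f := algebraMap ℝ ℂ)]
    rw [hsub, Matrix.sub_mulVec, ← Matrix.mulVec_mulVec, ← hw2_def, hw2z,
      Matrix.mulVec_zero, sub_zero] at hvec
    exact hvec
  -- Q A^k v = 0 for all k
  have hQAk : ∀ k : ℕ, ((Q * A ^ k).map (algebraMap ℝ ℂ)) *ᵥ v = 0 := by
    intro k
    have hAk : ((A ^ k).map (algebraMap ℝ ℂ)) *ᵥ v = μ ^ k • v := by
      induction k with
      | zero => simp [Matrix.map_one, Matrix.one_mulVec]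
      | succ k ih =>
        rw [pow_succ', Matrix.map_mul (f := algebraMap ℝ ℂ), ← Matrix.mulVec_mulVec, ih,
          Matrix.mulVec_smul, hAv, pow_succ', smul_smul, mul_comm]
    rw [Matrix.map_mul (f := algebraMap ℝ ℂ), ← Matrix.mulVec_mulVec, hAk,
      Matrix.mulVec_smul, hQv, smul_zero]
  -- transfer to ℝ and use observability
  have hre : (fun i => (v i).re) = 0 := by
    apply hObs
    intro k
    rw [Matrix.mulVec_mulVec]
    exact (mulVec_map_real (Q * A ^ k) v (hQAk k)).1
  have him' : (fun i => (v i).im) = 0 := by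
    apply hObs
    intro k
    rw [Matrix.mulVec_mulVec]
    exact (mulVec_map_real (Q * A ^ k) v (hQAk k)).2
  apply hv0
  funext i
  have h1 := congrFun hre i
  have h2 := congrFun him' i
  simp only [Pi.zero_apply] at h1 h2
  exact Complex.ext h1 h2
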